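/- Let Σ be a compact oriented surface with smooth area form ω and let φ ∈ Diff(Σ, ω). Let ω_φ be the closed 2-form on the mapping torus M_φ induced by ω. Then the class [ω_φ] ∈ H^2(M_φ, ∂M_φ; ℝ) is Poincaré dual to (∫_Σ ω) · C(φ); equivalently, for every smooth f: M_φ → ℝ/ℤ one has ∫_{M_φ} f^*dθ ∧ ω_φ = (∫_Σ ω) · ⟨C(φ), f⟩, where dθ is the closed 1-form on ℝ/ℤ with integral 1. -/

import Mathlib

open MeasureTheory Set Function Filter

noncomputable section

/-- The circle `𝕋 = ℝ/ℤ`. -/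
abbrev Circ : Type := AddCircle (1 : ℝ)

/-- The mapping-torus identification on `ℝ × X`: `(t, x) ∼ (t − n, eⁿ x)` for `n : ℤ`
(so in particular `(1, x) ∼ (0, e x)`), where `e` is the underlying bijection of the
homeomorphism. -/
def mtRel {X : Type*} (e : Equiv.Perm X) (p q : ℝ × X) : Prop :=
  ∃ n : ℤ, q.1 = p.1 - n ∧ q.2 = (e ^ n) p.2

/-- The mapping torus `M_φ`: the quotient of `ℝ × X` by `(1, x) ∼ (0, e x)`, with the
quotient topology. -/
def MappingTorus {X : Type*} [TopologicalSpace X] (e : Equiv.Perm X) : Type _ :=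
  Quot (mtRel e)

instance {X : Type*} [TopologicalSpace X] (e : Equiv.Perm X) :
    TopologicalSpace (MappingTorus e) :=
  inferInstanceAs (TopologicalSpace (Quot (mtRel e)))

instance {X : Type*} [TopologicalSpace X] (e : Equiv.Perm X) :
    MeasurableSpace (MappingTorus e) := borel _

instance {X : Type*} [TopologicalSpace X] (e : Equiv.Perm X) :
    BorelSpace (MappingTorus e) := ⟨rfl⟩

/-- The canonical projection `ℝ × X → M_φ`. -/
def mtMk {X : Type*} [TopologicalSpace X] (e : Equiv.Perm X) : ℝ × X → MappingTorus e :=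
  Quot.mk (mtRel e)

/-- The suspension flow `ψ^s [(t, x)] = [(t + s, x)]` on the mapping torus. -/
def suspFlow {X : Type*} [TopologicalSpace X] (e : Equiv.Perm X) (s : ℝ) :
    MappingTorus e → MappingTorus e :=
  Quot.map (fun p => (p.1 + s, p.2)) (by
    rintro ⟨t, x⟩ ⟨t', y⟩ ⟨n, h1, h2⟩
    exact ⟨n, by simp only at h1 h2 ⊢; rw [h1]; ring, h2⟩)

/-- The measure `dt ⊗ μ` on the mapping torus: the pushforward of the product of
Lebesgue measure on `[0,1)` with `μ` under the canonical projection. -/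
def mtMeasure {X : Type*} [TopologicalSpace X] (e : Equiv.Perm X) [MeasurableSpace X]
    (μ : Measure X) : Measure (MappingTorus e) :=
  Measure.map (mtMk e) ((volume.restrict (Ico (0 : ℝ) 1)).prod μ)

/-- `AsympPair e μ f r` says that the pairing `⟨C(φ, μ), [f]⟩` of Schwartzman's
asymptotic cycle `C(φ, μ) ∈ H₁(M_φ; ℝ) ≅ Hom([M_φ, ℝ/ℤ], ℝ)` with the class of
`f : M_φ → ℝ/ℤ` equals `r`: there is a continuous family `G (s, ·)` of real-valued
lifts of `f ∘ ψ^s − f` with `G (0, ·) = 0` such that `(∫ G (s, ·) d(dt ⊗ μ)) / s → r`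
as `s → ∞` (by Kingman's subadditive ergodic theorem this limit is the integral of
`G = lim g_s / s` against `dt ⊗ μ`). -/
def AsympPair {X : Type*} [TopologicalSpace X] (e : Equiv.Perm X) [MeasurableSpace X]
    (μ : Measure X) (f : C(MappingTorus e, Circ)) (r : ℝ) : Prop :=
  ∃ G : ℝ × MappingTorus e → ℝ, Continuous G ∧ (∀ m, G (0, m) = 0) ∧
    (∀ s m, ((G (s, m) : ℝ) : Circ) = f (suspFlow e s m) - f m) ∧
    Tendsto (fun s : ℝ => (∫ m, G (s, m) ∂(mtMeasure e μ)) / s) atTop (nhds r)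

section Aux

variable {X : Type*} [TopologicalSpace X]

lemma continuous_mtMk (e : Equiv.Perm X) : Continuous (mtMk e) := continuous_quot_mk

lemma continuous_suspFlow (e : Equiv.Perm X) (s : ℝ) : Continuous (suspFlow e s) := by
  unfold suspFlow Quot.map
  exact continuous_quot_lift _
    (continuous_quot_mk.comp ((continuous_fst.add continuous_const).prodMk continuous_snd))

lemma suspFlow_mtMk (e : Equiv.Perm X) (s : ℝ) (p : ℝ × X) :
    suspFlow e s (mtMk e p) = mtMk e (p.1 + s, p.2) := rfl

lemma mtMk_add_one (e : Equiv.Perm X) (t : ℝ) (x : X) :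
    mtMk e (t + 1, x) = mtMk e (t, e x) :=
  Quot.sound ⟨1, by push_cast; ring, by simp⟩

lemma mtMk_surj_Ico (e : Equiv.Perm X) (m : MappingTorus e) :
    ∃ p : ℝ × X, p.1 ∈ Ico (0 : ℝ) 1 ∧ mtMk e p = m := by
  induction m using Quot.ind with
  | _ q =>
    obtain ⟨t, x⟩ := q
    refine ⟨(Int.fract t, (e ^ ⌊t⌋) x), ⟨Int.fract_nonneg t, Int.fract_lt_one t⟩, ?_⟩
    refine Quot.sound ⟨-⌊t⌋, ?_, ?_⟩
    · push_cast [Int.fract]; ring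
    · simp [← Equiv.Perm.mul_apply, ← zpow_add]

lemma mt_compact [CompactSpace X] (e : Equiv.Perm X) : CompactSpace (MappingTorus e) := by
  refine ⟨?_⟩
  have hsub : (univ : Set (MappingTorus e)) ⊆ mtMk e '' (Icc 0 1 ×ˢ univ) := by
    intro m _
    obtain ⟨p, hp, rfl⟩ := mtMk_surj_Ico e m
    exact ⟨p, ⟨⟨hp.1, hp.2.le⟩, trivial⟩, rfl⟩
  exact ((isCompact_Icc.prod isCompact_univ).image (continuous_mtMk e)).of_isClosed_subset
    isClosed_univ hsub

lemma mt_connected [ConnectedSpace X] (e : Equiv.Perm X) : ConnectedSpace (MappingTorus e) :=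
  Quot.mk_surjective.connectedSpace continuous_quot_mk

lemma mt_finite [MeasurableSpace X] [SecondCountableTopology X] [OpensMeasurableSpace X]
    (e : Equiv.Perm X) (μ : Measure X) [IsFiniteMeasure μ] :
    IsFiniteMeasure (mtMeasure e μ) := by
  haveI : IsFiniteMeasure (volume.restrict (Ico (0 : ℝ) 1)) :=
    ⟨by rw [Measure.restrict_apply_univ]; simp [Real.volume_Ico]⟩
  constructor
  rw [mtMeasure, Measure.map_apply (continuous_mtMk e).measurable MeasurableSet.univ]
  exact measure_lt_top _ _

lemma continuous_integrable {Y : Type*} [TopologicalSpace Y] [CompactSpace Y]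
    [MeasurableSpace Y] [OpensMeasurableSpace Y] {ν : Measure Y} [IsFiniteMeasure ν]
    {g : Y → ℝ} (hg : Continuous g) : Integrable g ν := by
  obtain ⟨C, hC⟩ := isCompact_univ.exists_bound_of_continuousOn hg.continuousOn
  exact ⟨hg.aestronglyMeasurable, HasFiniteIntegral.of_bounded (ae_of_all _ fun y => hC y trivial)⟩

end Aux

section Inv

variable {X : Type*} [TopologicalSpace X] [CompactSpace X] [SecondCountableTopology X]
  [MeasurableSpace X] [BorelSpace X]

lemma integral_mtMeasure (e : Equiv.Perm X) (μ : Measure X) [IsFiniteMeasure μ]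
    {g : MappingTorus e → ℝ} (hg : Continuous g) :
    ∫ m, g m ∂(mtMeasure e μ) = ∫ p, g (mtMk e p) ∂((volume.restrict (Ico (0 : ℝ) 1)).prod μ) := by
  haveI := mt_finite e μ
  exact integral_map (continuous_mtMk e).aemeasurable hg.aestronglyMeasurable

lemma integral_suspFlow (φ : X ≃ₜ X) {μ : Measure X} [IsFiniteMeasure μ]
    (hφ : MeasurePreserving φ μ μ) (h : MappingTorus φ.toEquiv → ℝ) (hh : Continuous h) (u : ℝ) :
    ∫ m, h (suspFlow φ.toEquiv u m) ∂(mtMeasure φ.toEquiv μ)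
      = ∫ m, h m ∂(mtMeasure φ.toEquiv μ) := by
  set lam := volume.restrict (Ico (0 : ℝ) 1) with hlam
  haveI : IsFiniteMeasure lam :=
    ⟨by rw [hlam, Measure.restrict_apply_univ]; simp [Real.volume_Ico]⟩
  haveI : CompactSpace (MappingTorus φ.toEquiv) := mt_compact φ.toEquiv
  obtain ⟨C, hC⟩ := isCompact_univ.exists_bound_of_continuousOn hh.continuousOn
  set k : ℝ × X → ℝ := fun p => h (mtMk φ.toEquiv p) with hk
  have hkc : Continuous k := hh.comp (continuous_mtMk φ.toEquiv)
  have hkb : ∀ p, ‖k p‖ ≤ C := fun p => hC _ trivial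
  have hint : ∀ v : ℝ, Integrable (fun p : ℝ × X => k (p.1 + v, p.2)) (lam.prod μ) := fun v =>
    ⟨(hkc.comp ((continuous_fst.add continuous_const).prodMk continuous_snd)).aestronglyMeasurable,
      HasFiniteIntegral.of_bounded (C := C) (ae_of_all _ fun p => hkb _)⟩
  set F : ℝ → ℝ := fun t => ∫ x, k (t, x) ∂μ with hF
  have hFc : Continuous F := by
    apply continuous_of_dominated (bound := fun _ => C)
    · exact fun t => (hkc.comp (continuous_const.prodMk continuous_id)).aestronglyMeasurable
    · exact fun t => ae_of_all _ fun x => hkb _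
    · exact integrable_const C
    · exact ae_of_all _ fun x => hkc.comp (continuous_id.prodMk continuous_const)
  have hFp : Function.Periodic F 1 := by
    intro t
    have hk1 : ∀ x, k (t + 1, x) = k (t, φ x) :=
      fun x => congrArg h (mtMk_add_one φ.toEquiv t x)
    calc F (t + 1) = ∫ x, k (t, φ x) ∂μ := integral_congr_ae (ae_of_all _ hk1)
      _ = F t := hφ.integral_comp φ.measurableEmbedding fun y => k (t, y)
  have main : ∀ v : ℝ, ∫ p, k (p.1 + v, p.2) ∂(lam.prod μ) = ∫ t in (0:ℝ)..1, F t := by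
    intro v
    rw [MeasureTheory.integral_prod _ (hint v)]
    have step1 : ∫ t, (∫ x, k (t + v, x) ∂μ) ∂lam = ∫ t in (0:ℝ)..1, F (t + v) := by
      rw [hlam]
      rw [show (∫ t in Ico (0:ℝ) 1, (∫ x, k (t + v, x) ∂μ))
            = ∫ t in Ico (0:ℝ) 1, F (t + v) from rfl]
      rw [MeasureTheory.integral_Ico_eq_integral_Ioo,
        intervalIntegral.integral_of_le zero_le_one, integral_Ioc_eq_integral_Ioo]
    rw [step1, intervalIntegral.integral_comp_add_right, zero_add,
      show (1 : ℝ) + v = v + 1 by ring, hFp.intervalIntegral_add_eq v 0, zero_add]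
  have lhs : ∫ m, h (suspFlow φ.toEquiv u m) ∂(mtMeasure φ.toEquiv μ)
      = ∫ p, k (p.1 + u, p.2) ∂(lam.prod μ) :=
    integral_mtMeasure φ.toEquiv μ (hh.comp (continuous_suspFlow φ.toEquiv u))
  have rhs : ∫ m, h m ∂(mtMeasure φ.toEquiv μ) = ∫ p, k (p.1 + 0, p.2) ∂(lam.prod μ) := by
    rw [integral_mtMeasure φ.toEquiv μ hh]
    exact integral_congr_ae (ae_of_all _ fun p => by simp [hk])
  rw [lhs, rhs, main u, main 0]

end Inv

/-- **Lemma (Poincaré duality for the asymptotic cycle).**  Let `S` be a compact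
oriented surface with smooth area form `ω` (inducing the measure `μ`, of total mass
`A = ∫_S ω`) and let `φ ∈ Diff(S, ω)`.  Then the class
`[ω_φ] ∈ H²(M_φ, ∂M_φ; ℝ)` of the induced closed `2`-form on the mapping torus is
Poincaré dual to `(∫_S ω) · C(φ)`; equivalently, for every smooth `f : M_φ → ℝ/ℤ`,
`∫_{M_φ} f^* dθ ∧ ω_φ = (∫_S ω) · ⟨C(φ), f⟩`.

Here the left-hand side is rendered as `∫_{M_φ} (f^* dθ)(R) d(dt ⊗ ω)`, where the
function `D = (f^* dθ)(R)` is the derivative of `f` along the suspension flow, i.e.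
the `s`-derivative of the continuous family `G` of real lifts of `f ∘ ψ^s − f`. -/
theorem area_form_poincare_dual_to_asymptotic_cycle
    (S : Type*) [TopologicalSpace S] [CompactSpace S] [ConnectedSpace S] [T2Space S]
    [ChartedSpace (EuclideanHalfSpace 2) S]
    [IsManifold (modelWithCornersEuclideanHalfSpace 2) (⊤ : ℕ∞) S]
    [MeasurableSpace S] [BorelSpace S]
    -- the (unnormalized) measure induced by the smooth area form `ω` :
    (μ : Measure S) [IsFiniteMeasure μ] [NullSingletonClass μ]
    (hμpos : ∀ U : Set S, IsOpen U → U.Nonempty → 0 < μ U)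
    -- `φ ∈ Diff(S, ω)` :
    (φ : S ≃ₜ S)
    (hsm : ContMDiff (modelWithCornersEuclideanHalfSpace 2)
      (modelWithCornersEuclideanHalfSpace 2) (⊤ : ℕ∞) ⇑φ)
    (hsm' : ContMDiff (modelWithCornersEuclideanHalfSpace 2)
      (modelWithCornersEuclideanHalfSpace 2) (⊤ : ℕ∞) ⇑φ.symm)
    (hφ : MeasurePreserving ⇑φ μ μ)
    (f : C(MappingTorus φ.toEquiv, Circ))
    -- `D = (f^* dθ)(R)` is the derivative of `f` along the suspension flow :
    (D : MappingTorus φ.toEquiv → ℝ) (hD : Continuous D)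
    (hderiv : ∃ G : ℝ × MappingTorus φ.toEquiv → ℝ, Continuous G ∧
      (∀ m, G (0, m) = 0) ∧
      (∀ s m, ((G (s, m) : ℝ) : Circ) = f (suspFlow φ.toEquiv s m) - f m) ∧
      (∀ m s, HasDerivAt (fun u => G (u, m)) (D (suspFlow φ.toEquiv s m)) s))
    -- `r = ⟨C(φ), f⟩`, the asymptotic cycle of the normalized area measure :
    (r : ℝ) (hr : AsympPair φ.toEquiv ((μ Set.univ)⁻¹ • μ) f r) :
    ∫ m, D m ∂(mtMeasure φ.toEquiv μ) = (μ Set.univ).toReal * r := by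
  haveI : SecondCountableTopology (EuclideanHalfSpace 2) :=
    inferInstanceAs (SecondCountableTopology { x : EuclideanSpace ℝ (Fin 2) // 0 ≤ x 0 })
  haveI : SecondCountableTopology S :=
    ChartedSpace.secondCountable_of_sigmaCompact (EuclideanHalfSpace 2) S
  haveI : CompactSpace (MappingTorus φ.toEquiv) := mt_compact φ.toEquiv
  haveI : ConnectedSpace (MappingTorus φ.toEquiv) := mt_connected φ.toEquiv
  haveI : IsFiniteMeasure (mtMeasure φ.toEquiv μ) := mt_finite φ.toEquiv μ
  obtain ⟨G, hGc, hG0, hGlift, hGderiv⟩ := hderiv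
  obtain ⟨C, hC⟩ := isCompact_univ.exists_bound_of_continuousOn hD.continuousOn
  set ν := mtMeasure φ.toEquiv μ with hνdef
  set I := ∫ m, D m ∂ν with hI
  -- basic facts about the total mass
  have hμ0 : μ univ ≠ 0 := (hμpos univ isOpen_univ univ_nonempty).ne'
  have hμtop : μ univ ≠ ⊤ := measure_ne_top μ _
  set A := (μ univ).toReal with hA
  have hA0 : A ≠ 0 := (ENNReal.toReal_pos hμ0 hμtop).ne'
  -- flow invariance of the integral of D
  have hinv : ∀ u : ℝ, ∫ m, D (suspFlow φ.toEquiv u m) ∂ν = I := fun u =>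
    integral_suspFlow φ hφ D hD u
  -- derivative of H s = ∫ G (s, m) dν
  set H : ℝ → ℝ := fun s => ∫ m, G (s, m) ∂ν with hHdef
  have hGsec : ∀ s : ℝ, Continuous fun m => G (s, m) := fun s =>
    hGc.comp (continuous_const.prodMk continuous_id)
  have hHderiv : ∀ s₀ : ℝ, HasDerivAt H I s₀ := by
    intro s₀
    have key := hasDerivAt_integral_of_dominated_loc_of_deriv_le (μ := ν) (x₀ := s₀)
      (F := fun s m => G (s, m)) (F' := fun s m => D (suspFlow φ.toEquiv s m))
      (bound := fun _ => C) (Metric.ball_mem_nhds s₀ one_pos)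
      (Eventually.of_forall fun s => (hGsec s).aestronglyMeasurable)
      (continuous_integrable (hGsec s₀))
      ((hD.comp (continuous_suspFlow φ.toEquiv s₀)).aestronglyMeasurable)
      (ae_of_all _ fun m s _ => hC _ trivial)
      (integrable_const C)
      (ae_of_all _ fun m s _ => hGderiv m s)
    have := key.2
    rwa [hinv s₀] at this
  have hH0 : H 0 = 0 := by
    rw [hHdef]
    simp only [hG0]
    exact integral_zero _ _
  have hHs : ∀ s : ℝ, H s = I * s := by
    intro s
    have h1 : ∫ t in (0:ℝ)..s, I = H s - H 0 :=
      intervalIntegral.integral_eq_sub_of_hasDerivAt (fun t _ => hHderiv t)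
        intervalIntegrable_const
    rw [intervalIntegral.integral_const, hH0, sub_zero, sub_zero, smul_eq_mul] at h1
    rw [← h1, mul_comm]
  have hT : Tendsto (fun s : ℝ => H s / s) atTop (nhds I) := by
    refine tendsto_const_nhds.congr' ?_
    filter_upwards [eventually_gt_atTop (0 : ℝ)] with s hs
    rw [hHs, mul_div_assoc, div_self hs.ne', mul_one]
  -- identify the lift from the asymptotic pairing with G
  obtain ⟨G', hG'c, hG'0, hG'lift, hG'T⟩ := hr
  have hGG' : ∀ p : ℝ × MappingTorus φ.toEquiv, G' p = G p := by
    have hint : ∀ p : ℝ × MappingTorus φ.toEquiv, ∃ n : ℤ, (n : ℝ) = G p - G' p := by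
      rintro ⟨s, m⟩
      have h0 : ((G (s, m) - G' (s, m) : ℝ) : Circ) = 0 := by
        rw [AddCircle.coe_sub, hGlift s m, hG'lift s m, sub_self]
      obtain ⟨n, hn⟩ := (AddCircle.coe_eq_zero_iff (1 : ℝ)).mp h0
      exact ⟨n, by rw [← hn, zsmul_eq_mul, mul_one]⟩
    set Δ : ℝ × MappingTorus φ.toEquiv → ℝ := fun p => G p - G' p with hΔ
    have hΔc : Continuous Δ := hGc.sub hG'c
    have hZ : {p : ℝ × MappingTorus φ.toEquiv | Δ p = 0} = Δ ⁻¹' Ioo (-1) 1 := by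
      ext p
      constructor
      · intro hp
        have hp' : Δ p = 0 := hp
        simp only [mem_preimage, mem_Ioo, hp']
        norm_num
      · intro hp
        obtain ⟨n, hn⟩ := hint p
        have h1 : (-1 : ℝ) < (n : ℝ) := by rw [hn]; exact hp.1
        have h2 : ((n : ℝ)) < 1 := by rw [hn]; exact hp.2
        have h1' : (-1 : ℤ) < n := by exact_mod_cast h1
        have h2' : n < (1 : ℤ) := by exact_mod_cast h2
        have : n = 0 := by omega
        simp only [mem_setOf_eq, hΔ, ← hn, this, Int.cast_zero]
    have hclopen : IsClopen {p : ℝ × MappingTorus φ.toEquiv | Δ p = 0} := by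
      constructor
      · exact isClosed_eq hΔc continuous_const
      · rw [hZ]; exact isOpen_Ioo.preimage hΔc
    obtain ⟨x₀⟩ := (inferInstance : Nonempty S)
    have huniv : {p : ℝ × MappingTorus φ.toEquiv | Δ p = 0} = univ :=
      hclopen.eq_univ ⟨(0, mtMk φ.toEquiv (0, x₀)), by
        simp only [mem_setOf_eq, hΔ, hG0, hG'0, sub_zero]⟩
    intro p
    have hp : p ∈ {p : ℝ × MappingTorus φ.toEquiv | Δ p = 0} := huniv ▸ mem_univ p
    have : G p - G' p = 0 := hp
    linarith
  -- the scaled mapping-torus measure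
  haveI : IsFiniteMeasure ((μ univ)⁻¹ • μ) := by
    constructor
    rw [Measure.smul_apply, smul_eq_mul, ENNReal.inv_mul_cancel hμ0 hμtop]
    exact ENNReal.one_lt_top
  have hsmulmt : mtMeasure φ.toEquiv ((μ univ)⁻¹ • μ) = (μ univ)⁻¹ • ν := by
    have hps : (volume.restrict (Ico (0:ℝ) 1)).prod ((μ univ)⁻¹ • μ)
        = (μ univ)⁻¹ • (volume.restrict (Ico (0:ℝ) 1)).prod μ := by
      refine Measure.prod_eq fun s t hs ht => ?_
      rw [Measure.smul_apply, Measure.prod_prod, Measure.smul_apply, smul_eq_mul, smul_eq_mul]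
      ring
    rw [hνdef, mtMeasure, mtMeasure, hps, Measure.map_smul]
  have hswap : ∀ s : ℝ, (∫ m, G' (s, m) ∂(mtMeasure φ.toEquiv ((μ univ)⁻¹ • μ))) / s
      = A⁻¹ * (H s / s) := by
    intro s
    have h1 : (fun m => G' (s, m)) = fun m => G (s, m) := funext fun m => hGG' (s, m)
    rw [hsmulmt, integral_smul_measure, h1, ENNReal.toReal_inv, smul_eq_mul, ← hA]
    show (A⁻¹ * H s) / s = A⁻¹ * (H s / s)
    ring
  have hT2 : Tendsto (fun s : ℝ =>
      (∫ m, G' (s, m) ∂(mtMeasure φ.toEquiv ((μ univ)⁻¹ • μ))) / s) atTop (nhds (A⁻¹ * I)) :=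
    (hT.const_mul A⁻¹).congr fun s => (hswap s).symm
  have hrI : r = A⁻¹ * I := tendsto_nhds_unique hG'T hT2
  rw [hrI, ← mul_assoc, mul_inv_cancel₀ hA0, one_mul]

end
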